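/- For any fitness graph 𝒢=(G,(m,r)) and any two seed sets S ⊆ S' ⊆ V, the fixation probabilities satisfy fp_𝒢(S) ≤ fp_𝒢(S'). -/

import Mathlib

open Finset
open scoped Classical

/-- A fitness graph: a finite strongly connected weighted directed graph together with
mutant and resident fitness functions. `w u v > 0` encodes that `(u,v)` is an edge
of non-zero weight; `w u ·` is a probability distribution. -/
structure FitnessGraph (V : Type) [Fintype V] [DecidableEq V] where
  w : V → V → ℝ
  m : V → ℝ
  r : V → ℝ
  w_nonneg : ∀ u v, 0 ≤ w u v
  w_rowsum : ∀ u, ∑ v, w u v = 1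
  strongly_connected : ∀ u v : V, Relation.ReflTransGen (fun a b => 0 < w a b) u v
  m_pos : ∀ u, 0 < m u
  r_pos : ∀ u, 0 < r u

variable {V : Type} [Fintype V] [DecidableEq V]

/-- A fitness graph is mutant-biased if `m(u) ≥ r(u)` for every node `u`. -/
def FitnessGraph.MutantBiased (G : FitnessGraph V) : Prop :=
  ∀ u, G.r u ≤ G.m u

/-- The (out-)degree of a node: the number of neighbors along edges of non-zero weight. -/
noncomputable def FitnessGraph.deg (G : FitnessGraph V) (u : V) : ℕ :=
  (Finset.univ.filter fun v => 0 < G.w u v).card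

/-- A fitness graph is undirected if its edge relation is symmetric and the weights
are uniform: `w(u,v) = 1/d(u)` for every edge `(u,v)`. -/
def FitnessGraph.Undirected (G : FitnessGraph V) : Prop :=
  (∀ u v, 0 < G.w u v → 0 < G.w v u) ∧
  ∀ u v, 0 < G.w u v → G.w u v = 1 / (G.deg u : ℝ)

/-- The fitness of node `u` in configuration `X`: `m(u)` if `u` is a mutant, `r(u)` otherwise. -/
def FitnessGraph.fit (G : FitnessGraph V) (X : Finset V) (u : V) : ℝ :=
  if u ∈ X then G.m u else G.r u

/-- Total population fitness in configuration `X`. -/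
def FitnessGraph.totalFit (G : FitnessGraph V) (X : Finset V) : ℝ :=
  ∑ u, G.fit X u

/-- The configuration resulting from `X` when `u` reproduces and replaces `v`. -/
def moranNext (X : Finset V) (u v : V) : Finset V :=
  if u ∈ X then insert v X else X.erase v

/-- One-step transition probability of the Heterogeneous Moran process. -/
noncomputable def FitnessGraph.step (G : FitnessGraph V) (X Y : Finset V) : ℝ :=
  ∑ u, ∑ v, (G.fit X u / G.totalFit X) * G.w u v * (if moranNext X u v = Y then 1 else 0)

/-- `t`-step transition probability of the Heterogeneous Moran process. -/
noncomputable def FitnessGraph.stepN (G : FitnessGraph V) : ℕ → Finset V → Finset V → ℝ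
  | 0, X, Y => if X = Y then 1 else 0
  | t + 1, X, Y => ∑ Z, FitnessGraph.stepN G t X Z * G.step Z Y

/-- Fixation probability: the probability that, started from seed set `S`, the process
eventually reaches the all-mutant configuration `V`; since `V` is absorbing this equals
`⨆ t, P(X_t = V)`. -/
noncomputable def FitnessGraph.fp (G : FitnessGraph V) (S : Finset V) : ℝ :=
  ⨆ t : ℕ, G.stepN t S Finset.univ

/-! ### Auxiliary development -/

section Kernel

/-- `t`-step power of a kernel. -/
noncomputable def kpow (K : Finset V → Finset V → ℝ) : ℕ → Finset V → Finset V → ℝ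
  | 0, X, Y => if X = Y then 1 else 0
  | t + 1, X, Y => ∑ Z, kpow K t X Z * K Z Y

variable {K : Finset V → Finset V → ℝ}

lemma kpow_nonneg (hK0 : ∀ X Y, 0 ≤ K X Y) : ∀ t X Y, 0 ≤ kpow K t X Y := by
  intro t
  induction t with
  | zero => intro X Y; simp only [kpow]; positivity
  | succ t ih =>
      intro X Y
      exact Finset.sum_nonneg fun Z _ => mul_nonneg (ih X Z) (hK0 Z Y)

lemma kpow_rowsum (hK1 : ∀ X, ∑ Y, K X Y = 1) : ∀ t X, ∑ Y, kpow K t X Y = 1 := by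
  intro t
  induction t with
  | zero => intro X; simp [kpow]
  | succ t ih =>
      intro X
      simp only [kpow]
      rw [Finset.sum_comm]
      have : ∀ Z ∈ Finset.univ, ∑ Y, kpow K t X Z * K Z Y = kpow K t X Z := by
        intro Z _
        rw [← Finset.mul_sum, hK1 Z, mul_one]
      rw [Finset.sum_congr rfl this, ih X]

lemma kpow_le_one (hK0 : ∀ X Y, 0 ≤ K X Y) (hK1 : ∀ X, ∑ Y, K X Y = 1) (t : ℕ)
    (X Y : Finset V) : kpow K t X Y ≤ 1 := by
  calc kpow K t X Y ≤ ∑ Z, kpow K t X Z :=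
        Finset.single_le_sum (fun Z _ => kpow_nonneg hK0 t X Z) (Finset.mem_univ Y)
    _ = 1 := kpow_rowsum hK1 t X

lemma kpow_succ_left (t : ℕ) (X Y : Finset V) :
    kpow K (t + 1) X Y = ∑ Z, K X Z * kpow K t Z Y := by
  induction t generalizing X Y with
  | zero =>
      simp [kpow, ite_mul, mul_ite, Finset.sum_ite_eq, Finset.sum_ite_eq']
  | succ t ih =>
      show ∑ Z, kpow K (t+1) X Z * K Z Y = _
      calc ∑ Z, kpow K (t+1) X Z * K Z Y
          = ∑ Z, (∑ W, K X W * kpow K t W Z) * K Z Y := by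
            refine Finset.sum_congr rfl fun Z _ => ?_; rw [ih]
        _ = ∑ Z, ∑ W, K X W * (kpow K t W Z * K Z Y) := by
            refine Finset.sum_congr rfl fun Z _ => ?_
            rw [Finset.sum_mul]
            exact Finset.sum_congr rfl fun W _ => by ring
        _ = ∑ W, ∑ Z, K X W * (kpow K t W Z * K Z Y) := Finset.sum_comm
        _ = ∑ W, K X W * ∑ Z, kpow K t W Z * K Z Y := by
            exact Finset.sum_congr rfl fun W _ => (Finset.mul_sum _ _ _).symm
        _ = ∑ W, K X W * kpow K (t+1) W Y := rfl

lemma kpow_univ (hK0 : ∀ X Y, 0 ≤ K X Y) (hK1 : ∀ X, ∑ Y, K X Y = 1)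
    (habs : K Finset.univ Finset.univ = 1) (t : ℕ) :
    kpow K t Finset.univ Finset.univ = 1 := by
  induction t with
  | zero => simp [kpow]
  | succ t ih =>
      refine le_antisymm (kpow_le_one hK0 hK1 _ _ _) ?_
      calc (1:ℝ) = kpow K t Finset.univ Finset.univ * K Finset.univ Finset.univ := by
            rw [ih, habs, mul_one]
        _ ≤ ∑ Z, kpow K t Finset.univ Z * K Z Finset.univ :=
            Finset.single_le_sum
              (fun Z _ => mul_nonneg (kpow_nonneg hK0 t _ Z) (hK0 Z _))
              (Finset.mem_univ _)
        _ = kpow K (t+1) Finset.univ Finset.univ := rfl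

lemma kpow_univ_mono (hK0 : ∀ X Y, 0 ≤ K X Y)
    (habs : K Finset.univ Finset.univ = 1) (t : ℕ) (X : Finset V) :
    kpow K t X Finset.univ ≤ kpow K (t+1) X Finset.univ := by
  calc kpow K t X Finset.univ
      = kpow K t X Finset.univ * K Finset.univ Finset.univ := by rw [habs, mul_one]
    _ ≤ ∑ Z, kpow K t X Z * K Z Finset.univ :=
        Finset.single_le_sum
          (fun Z _ => mul_nonneg (kpow_nonneg hK0 t X Z) (hK0 Z _)) (Finset.mem_univ _)
    _ = kpow K (t+1) X Finset.univ := rfl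

end Kernel


section Sup

open Filter Topology

noncomputable def hsup (K : Finset V → Finset V → ℝ) (X : Finset V) : ℝ :=
  ⨆ t : ℕ, kpow K t X Finset.univ

variable {K : Finset V → Finset V → ℝ}

lemma hsup_bdd (hK0 : ∀ X Y, 0 ≤ K X Y) (hK1 : ∀ X, ∑ Y, K X Y = 1) (X : Finset V) :
    BddAbove (Set.range fun t => kpow K t X Finset.univ) :=
  ⟨1, by rintro x ⟨t, rfl⟩; exact kpow_le_one hK0 hK1 t X _⟩

lemma le_hsup (hK0 : ∀ X Y, 0 ≤ K X Y) (hK1 : ∀ X, ∑ Y, K X Y = 1) (t : ℕ) (X : Finset V) :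
    kpow K t X Finset.univ ≤ hsup K X :=
  le_ciSup (hsup_bdd hK0 hK1 X) t

lemma hsup_nonneg (hK0 : ∀ X Y, 0 ≤ K X Y) (hK1 : ∀ X, ∑ Y, K X Y = 1) (X : Finset V) :
    0 ≤ hsup K X :=
  (kpow_nonneg hK0 0 X _).trans (le_hsup hK0 hK1 0 X)

lemma hsup_univ (hK0 : ∀ X Y, 0 ≤ K X Y) (hK1 : ∀ X, ∑ Y, K X Y = 1)
    (habs : K Finset.univ Finset.univ = 1) : hsup K Finset.univ = 1 := by
  refine le_antisymm (ciSup_le fun t => kpow_le_one hK0 hK1 t _ _) ?_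
  have := le_hsup hK0 hK1 0 (Finset.univ : Finset V)
  rwa [kpow_univ hK0 hK1 habs 0] at this

lemma hsup_harmonic (hK0 : ∀ X Y, 0 ≤ K X Y) (hK1 : ∀ X, ∑ Y, K X Y = 1)
    (habs : K Finset.univ Finset.univ = 1) (X : Finset V) :
    hsup K X = ∑ Y, K X Y * hsup K Y := by
  have hmono : ∀ W : Finset V, Monotone fun t => kpow K t W Finset.univ := fun W =>
    monotone_nat_of_le_succ fun t => kpow_univ_mono hK0 habs t W
  have h1 : Tendsto (fun t => kpow K t X Finset.univ) atTop (𝓝 (hsup K X)) :=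
    tendsto_atTop_ciSup (hmono X) (hsup_bdd hK0 hK1 X)
  have h2 : Tendsto (fun t => kpow K (t + 1) X Finset.univ) atTop (𝓝 (hsup K X)) :=
    h1.comp (tendsto_add_atTop_nat 1)
  have h3 : Tendsto (fun t => ∑ Y, K X Y * kpow K t Y Finset.univ) atTop
      (𝓝 (∑ Y, K X Y * hsup K Y)) :=
    tendsto_finset_sum _ fun Y _ =>
      (tendsto_atTop_ciSup (hmono Y) (hsup_bdd hK0 hK1 Y)).const_mul (K X Y)
  have heq : (fun t => kpow K (t + 1) X Finset.univ)
      = fun t => ∑ Y, K X Y * kpow K t Y Finset.univ :=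
    funext fun t => kpow_succ_left t X _
  exact tendsto_nhds_unique (heq ▸ h2) h3

lemma kpow_le_of_harmonic (hK0 : ∀ X Y, 0 ≤ K X Y) {h : Finset V → ℝ}
    (hh0 : ∀ Y, 0 ≤ h Y) (hh1 : 1 ≤ h Finset.univ)
    (hharm : ∀ X, ∑ Y, K X Y * h Y = h X) : ∀ t X, kpow K t X Finset.univ ≤ h X := by
  intro t
  induction t with
  | zero =>
      intro X
      simp only [kpow]
      split
      · next hx => rw [hx]; exact hh1
      · exact hh0 X
  | succ t ih =>
      intro X
      rw [kpow_succ_left]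
      calc ∑ Z, K X Z * kpow K t Z Finset.univ ≤ ∑ Z, K X Z * h Z :=
            Finset.sum_le_sum fun Z _ => mul_le_mul_of_nonneg_left (ih Z) (hK0 X Z)
        _ = h X := hharm X

lemma hsup_le_of_harmonic (hK0 : ∀ X Y, 0 ≤ K X Y) {h : Finset V → ℝ}
    (hh0 : ∀ Y, 0 ≤ h Y) (hh1 : 1 ≤ h Finset.univ)
    (hharm : ∀ X, ∑ Y, K X Y * h Y = h X) (X : Finset V) : hsup K X ≤ h X :=
  ciSup_le fun t => kpow_le_of_harmonic hK0 hh0 hh1 hharm t X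

end Sup


set_option linter.unusedSectionVars false
section Moran

variable (G : FitnessGraph V)

noncomputable def Cmax : ℝ := ∑ u : V, max (G.m u) (G.r u)

lemma fit_pos (X : Finset V) (u : V) : 0 < G.fit X u := by
  unfold FitnessGraph.fit
  split
  · exact G.m_pos u
  · exact G.r_pos u

lemma fit_le (X : Finset V) (u : V) : G.fit X u ≤ max (G.m u) (G.r u) := by
  unfold FitnessGraph.fit
  split
  · exact le_max_left _ _
  · exact le_max_right _ _

variable [Nonempty V]

lemma totalFit_pos (X : Finset V) : 0 < G.totalFit X :=
  Finset.sum_pos (fun u _ => fit_pos G X u) Finset.univ_nonempty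

lemma Cmax_pos : 0 < Cmax G :=
  Finset.sum_pos (fun u _ => lt_of_lt_of_le (G.r_pos u) (le_max_right _ _))
    Finset.univ_nonempty

lemma totalFit_le_Cmax (X : Finset V) : G.totalFit X ≤ Cmax G :=
  Finset.sum_le_sum fun u _ => fit_le G X u

/-- Lazy (uniformized) kernel. -/
noncomputable def stepL (X Y : Finset V) : ℝ :=
  (G.totalFit X / Cmax G) * G.step X Y
    + (1 - G.totalFit X / Cmax G) * (if X = Y then 1 else 0)

lemma step_expect (X : Finset V) (g : Finset V → ℝ) :
    ∑ Y, G.step X Y * g Y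
      = ∑ u, ∑ v, (G.fit X u / G.totalFit X) * G.w u v * g (moranNext X u v) := by
  calc ∑ Y, G.step X Y * g Y
      = ∑ Y, ∑ u, ∑ v, (G.fit X u / G.totalFit X) * G.w u v
          * (if moranNext X u v = Y then 1 else 0) * g Y := by
        refine Finset.sum_congr rfl fun Y _ => ?_
        unfold FitnessGraph.step
        rw [Finset.sum_mul]
        exact Finset.sum_congr rfl fun u _ => by rw [Finset.sum_mul]
    _ = ∑ u, ∑ Y, ∑ v, (G.fit X u / G.totalFit X) * G.w u v
          * (if moranNext X u v = Y then 1 else 0) * g Y := Finset.sum_comm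
    _ = ∑ u, ∑ v, ∑ Y, (G.fit X u / G.totalFit X) * G.w u v
          * (if moranNext X u v = Y then 1 else 0) * g Y :=
        Finset.sum_congr rfl fun u _ => Finset.sum_comm
    _ = ∑ u, ∑ v, (G.fit X u / G.totalFit X) * G.w u v * g (moranNext X u v) := by
        refine Finset.sum_congr rfl fun u _ => Finset.sum_congr rfl fun v _ => ?_
        simp [mul_ite, ite_mul, Finset.sum_ite_eq]

lemma sum_fit_w (X : Finset V) :
    ∑ u, ∑ v, (G.fit X u / G.totalFit X) * G.w u v = 1 := by
  have : ∀ u : V, ∑ v, (G.fit X u / G.totalFit X) * G.w u v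
      = G.fit X u / G.totalFit X := by
    intro u
    rw [← Finset.mul_sum, G.w_rowsum u, mul_one]
  rw [Finset.sum_congr rfl fun u _ => this u, ← Finset.sum_div]
  exact div_self (totalFit_pos G X).ne'

lemma step_rowsum (X : Finset V) : ∑ Y, G.step X Y = 1 := by
  have h := step_expect G X fun _ => 1
  simpa [sum_fit_w G X] using h

lemma step_nonneg (X Y : Finset V) : 0 ≤ G.step X Y := by
  refine Finset.sum_nonneg fun u _ => Finset.sum_nonneg fun v _ => ?_
  refine mul_nonneg (mul_nonneg ?_ (G.w_nonneg u v)) ?_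
  · exact div_nonneg (fit_pos G X u).le (totalFit_pos G X).le
  · split <;> norm_num

lemma step_univ : G.step Finset.univ Finset.univ = 1 := by
  unfold FitnessGraph.step
  have h : ∀ u v : V, moranNext (Finset.univ : Finset V) u v = Finset.univ := by
    intro u v
    simp [moranNext]
  simpa [h] using sum_fit_w G Finset.univ

lemma stepL_nonneg (X Y : Finset V) : 0 ≤ stepL G X Y := by
  have h1 : (0:ℝ) ≤ G.totalFit X / Cmax G :=
    div_nonneg (totalFit_pos G X).le (Cmax_pos G).le
  have h2 : G.totalFit X / Cmax G ≤ 1 :=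
    (div_le_one (Cmax_pos G)).mpr (totalFit_le_Cmax G X)
  refine add_nonneg (mul_nonneg h1 (step_nonneg G X Y)) (mul_nonneg (by linarith) ?_)
  split <;> norm_num

lemma stepL_expect (X : Finset V) (g : Finset V → ℝ) :
    ∑ Y, stepL G X Y * g Y
      = (G.totalFit X / Cmax G) * (∑ Y, G.step X Y * g Y)
        + (1 - G.totalFit X / Cmax G) * g X := by
  unfold stepL
  rw [Finset.sum_congr rfl fun Y _ => add_mul _ _ _, Finset.sum_add_distrib]
  congr 1
  · rw [Finset.mul_sum]
    exact Finset.sum_congr rfl fun Y _ => by ring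
  · simp [mul_ite, ite_mul, Finset.sum_ite_eq]

lemma stepL_rowsum (X : Finset V) : ∑ Y, stepL G X Y = 1 := by
  have h := stepL_expect G X fun _ => 1
  simp only [mul_one] at h
  rw [step_rowsum G X] at h
  simpa using h

lemma stepL_univ : stepL G Finset.univ Finset.univ = 1 := by
  unfold stepL
  rw [step_univ G]
  simp

end Moran


set_option linter.unusedSectionVars false
section Key

variable (G : FitnessGraph V) [Nonempty V]

/-- Expected value of `g` after one lazy step, numerator form. -/
noncomputable def eval1 (X : Finset V) (g : Finset V → ℝ) : ℝ :=
  ∑ u, ∑ v, G.fit X u * G.w u v * g (moranNext X u v)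

lemma stepL_expect' (X : Finset V) (g : Finset V → ℝ) :
    ∑ Y, stepL G X Y * g Y
      = (eval1 G X g + (Cmax G - G.totalFit X) * g X) / Cmax G := by
  have hF : G.totalFit X ≠ 0 := (totalFit_pos G X).ne'
  have hC : Cmax G ≠ 0 := (Cmax_pos G).ne'
  rw [stepL_expect, step_expect]
  have h1 : (G.totalFit X / Cmax G)
      * (∑ u, ∑ v, (G.fit X u / G.totalFit X) * G.w u v * g (moranNext X u v))
      = eval1 G X g / Cmax G := by
    unfold eval1
    rw [Finset.mul_sum, Finset.sum_div]
    refine Finset.sum_congr rfl fun u _ => ?_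
    rw [Finset.mul_sum, Finset.sum_div]
    refine Finset.sum_congr rfl fun v _ => ?_
    field_simp
  rw [h1]
  field_simp

lemma eval1_key (g : Finset V → ℝ) (hg : ∀ A B : Finset V, A ⊆ B → g A ≤ g B)
    {X X' : Finset V} (hXX' : X ⊆ X') :
    eval1 G X g + (Cmax G - G.totalFit X) * g X
      ≤ eval1 G X' g + (Cmax G - G.totalFit X') * g X' := by
  set T : V → V → ℝ := fun u v =>
    G.fit X' u * g (moranNext X' u v) - G.fit X u * g (moranNext X u v)
      + (G.fit X u - G.fit X' u) * g X with hT
  have hTnn : ∀ u v, 0 ≤ T u v := by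
    intro u v
    by_cases hu : u ∈ X
    · have hu' : u ∈ X' := hXX' hu
      have hgm : g (insert v X) ≤ g (insert v X') :=
        hg _ _ (Finset.insert_subset_insert v hXX')
      have hm := (G.m_pos u).le
      simp only [hT, FitnessGraph.fit, moranNext, if_pos hu, if_pos hu']
      nlinarith
    · by_cases hu' : u ∈ X'
      · have h1 : g X ≤ g (insert v X') :=
          hg _ _ (hXX'.trans (Finset.subset_insert v X'))
        have h2 : g (X.erase v) ≤ g X := hg _ _ (Finset.erase_subset v X)
        have hm := (G.m_pos u).le
        have hr := (G.r_pos u).le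
        simp only [hT, FitnessGraph.fit, moranNext, if_neg hu, if_pos hu']
        nlinarith
      · have h1 : g (X.erase v) ≤ g (X'.erase v) :=
          hg _ _ (Finset.erase_subset_erase v hXX')
        have hr := (G.r_pos u).le
        simp only [hT, FitnessGraph.fit, moranNext, if_neg hu, if_neg hu']
        nlinarith
  have hsum : ∑ u, ∑ v, G.w u v * T u v
      = eval1 G X' g - eval1 G X g + (G.totalFit X - G.totalFit X') * g X := by
    have per_u : ∀ u : V, ∑ v, G.w u v * T u v
        = (∑ v, G.fit X' u * G.w u v * g (moranNext X' u v))
          - (∑ v, G.fit X u * G.w u v * g (moranNext X u v))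
          + (G.fit X u - G.fit X' u) * g X := by
      intro u
      have h1 : ∑ v, G.w u v * T u v
          = ∑ v, (G.fit X' u * G.w u v * g (moranNext X' u v)
              - G.fit X u * G.w u v * g (moranNext X u v)
              + G.w u v * ((G.fit X u - G.fit X' u) * g X)) :=
        Finset.sum_congr rfl fun v _ => by simp only [hT]; ring
      rw [h1, Finset.sum_add_distrib, Finset.sum_sub_distrib, ← Finset.sum_mul,
        G.w_rowsum u, one_mul]
    rw [Finset.sum_congr rfl fun u _ => per_u u, Finset.sum_add_distrib,
      Finset.sum_sub_distrib, ← Finset.sum_mul]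
    unfold eval1 FitnessGraph.totalFit
    rw [Finset.sum_sub_distrib]
  have hD1 : 0 ≤ ∑ u, ∑ v, G.w u v * T u v :=
    Finset.sum_nonneg fun u _ => Finset.sum_nonneg fun v _ =>
      mul_nonneg (G.w_nonneg u v) (hTnn u v)
  have hD2 : 0 ≤ (Cmax G - G.totalFit X') * (g X' - g X) :=
    mul_nonneg (sub_nonneg.mpr (totalFit_le_Cmax G X')) (sub_nonneg.mpr (hg _ _ hXX'))
  nlinarith [hsum, hD1, hD2]

end Key


set_option linter.unusedSectionVars false
section Final

variable (G : FitnessGraph V) [Nonempty V]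

lemma stepL_key (g : Finset V → ℝ) (hg : ∀ A B : Finset V, A ⊆ B → g A ≤ g B)
    {X X' : Finset V} (hXX' : X ⊆ X') :
    ∑ Y, stepL G X Y * g Y ≤ ∑ Y, stepL G X' Y * g Y := by
  rw [stepL_expect' G X g, stepL_expect' G X' g]
  exact (div_le_div_iff_of_pos_right (Cmax_pos G)).mpr (eval1_key G g hg hXX')

lemma kpowL_mono (t : ℕ) : ∀ X X' : Finset V, X ⊆ X' →
    kpow (stepL G) t X Finset.univ ≤ kpow (stepL G) t X' Finset.univ := by
  induction t with
  | zero =>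
      intro X X' hXX'
      simp only [kpow]
      split
      · next h =>
          subst h
          rw [if_pos (Finset.univ_subset_iff.mp hXX')]
      · split
        · norm_num
        · exact le_refl 0
  | succ t ih =>
      intro X X' hXX'
      rw [kpow_succ_left, kpow_succ_left]
      exact stepL_key G (fun Z => kpow (stepL G) t Z Finset.univ)
        (fun A B h => ih A B h) hXX'

lemma stepN_eq_kpow (t : ℕ) (X Y : Finset V) :
    G.stepN t X Y = kpow (G.step) t X Y := by
  induction t generalizing X Y with
  | zero => rfl
  | succ t ih => simp only [FitnessGraph.stepN, kpow, ih]

-- harmonicity of h := hsup (G.step) for the lazy kernel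
lemma h_harm_L (X : Finset V) :
    ∑ Y, stepL G X Y * hsup (G.step) Y = hsup (G.step) X := by
  rw [stepL_expect,
    (hsup_harmonic (step_nonneg G) (step_rowsum G) (step_univ G) X).symm]
  ring

-- harmonicity of hL := hsup (stepL G) for the original kernel
lemma hL_harm_step (X : Finset V) :
    ∑ Y, G.step X Y * hsup (stepL G) Y = hsup (stepL G) X := by
  have hexp := stepL_expect G X (hsup (stepL G))
  have hharm := (hsup_harmonic (stepL_nonneg G) (stepL_rowsum G) (stepL_univ G) X).symm
  -- hharm : ∑ Y, stepL G X Y * hsup (stepL G) Y = hsup (stepL G) X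
  rw [hexp] at hharm
  have hFC : G.totalFit X / Cmax G ≠ 0 :=
    div_ne_zero (totalFit_pos G X).ne' (Cmax_pos G).ne'
  have h0 : G.totalFit X / Cmax G * (∑ Y, G.step X Y * hsup (stepL G) Y
      - hsup (stepL G) X) = 0 := by linear_combination hharm
  have := (mul_eq_zero.mp h0).resolve_left hFC
  linarith

lemma hsup_eq (X : Finset V) : hsup (stepL G) X = hsup (G.step) X := by
  refine le_antisymm ?_ ?_
  · exact hsup_le_of_harmonic (stepL_nonneg G)
      (hsup_nonneg (step_nonneg G) (step_rowsum G))
      (ge_of_eq (hsup_univ (step_nonneg G) (step_rowsum G) (step_univ G)))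
      (h_harm_L G) X
  · exact hsup_le_of_harmonic (step_nonneg G)
      (hsup_nonneg (stepL_nonneg G) (stepL_rowsum G))
      (ge_of_eq (hsup_univ (stepL_nonneg G) (stepL_rowsum G) (stepL_univ G)))
      (hL_harm_step G) X

lemma fp_eq_hsup (S : Finset V) : G.fp S = hsup (G.step) S := by
  unfold FitnessGraph.fp hsup
  exact iSup_congr fun t => stepN_eq_kpow G t S Finset.univ

end Final

/-- Monotonicity of the fixation probability: enlarging the seed set cannot decrease
the fixation probability of the Heterogeneous Moran process. -/
theorem fp_monotone (G : FitnessGraph V) (S S' : Finset V) (hSS' : S ⊆ S') :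
    G.fp S ≤ G.fp S' := by
  cases isEmpty_or_nonempty V with
  | inl h =>
      have h1 : S = S' := Subsingleton.elim S S'
      rw [h1]
  | inr h =>
      rw [fp_eq_hsup G S, fp_eq_hsup G S', ← hsup_eq G S, ← hsup_eq G S']
      refine ciSup_le fun t => ?_
      exact (kpowL_mono G t S S' hSS').trans
        (le_hsup (stepL_nonneg G) (stepL_rowsum G) t S')
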